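/- Let R be a commutative noetherian ring, S a left noetherian ring which is an R-algebra, and M a nonzero S-module that is finitely generated as an S-module. Then there is a finite chain of S-submodules 0 = M_0 ⊆ M_1 ⊆ … ⊆ M_p = M such that each successive quotient M_i/M_{i-1} is R-elementary; moreover, for any such chain, Ass(M) ⊆ ⋃_{i=1}^{p} Ass(M_i/M_{i-1}). -/

import Mathlib

/-- Annihilator in `R` of an `S`-submodule, `R` acting through `algebraMap R S`. -/
def annRS (R : Type*) {S M : Type*} [CommRing R] [Ring S] [Algebra R S]
    [AddCommGroup M] [Module S M] (N : Submodule S M) : Ideal R where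
  carrier := {r : R | ∀ x ∈ N, algebraMap R S r • x = 0}
  zero_mem' := by intro x _; simp
  add_mem' := by
    intro a b ha hb x hx
    rw [map_add, add_smul, ha x hx, hb x hx, add_zero]
  smul_mem' := by
    intro c a ha x hx
    rw [smul_eq_mul, map_mul, mul_smul, ha x hx, smul_zero]

/-- An `R`-elementary object: nonzero, finitely generated, and the `R`-annihilator of
every nonzero subobject equals a fixed prime ideal `p` of `R`. -/
def IsRElem (R : Type*) {S M : Type*} [CommRing R] [Ring S] [Algebra R S]
    [AddCommGroup M] [Module S M] (L : Submodule S M) : Prop :=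
  L ≠ ⊥ ∧ L.FG ∧ ∃ p : Ideal R, p.IsPrime ∧
    ∀ L' : Submodule S M, L' ≤ L → L' ≠ ⊥ → annRS R L' = p

/-- Associated primes of the subobject `N`. -/
def RAssOf (R : Type*) {S M : Type*} [CommRing R] [Ring S] [Algebra R S]
    [AddCommGroup M] [Module S M] (N : Submodule S M) : Set (Ideal R) :=
  {p | ∃ L : Submodule S M, L ≤ N ∧ IsRElem R L ∧ annRS R L = p}

section Aux

variable {R S M : Type*} [CommRing R] [Ring S] [Algebra R S]
    [AddCommGroup M] [Module S M]

lemma mem_annRS' {N : Submodule S M} {r : R} :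
    r ∈ annRS R N ↔ ∀ x ∈ N, algebraMap R S r • x = 0 := Iff.rfl

lemma annRS_mono {N N' : Submodule S M} (h : N ≤ N') : annRS R N' ≤ annRS R N :=
  fun _ hr x hx => hr x (h hx)

lemma annRS_map {M₂ : Type*} [AddCommGroup M₂] [Module S M₂] (f : M →ₗ[S] M₂)
    {L : Submodule S M} (hf : ∀ x ∈ L, f x = 0 → x = 0) :
    annRS R (L.map f) = annRS R L := by
  ext r
  constructor
  · intro hr x hx
    refine hf _ (L.smul_mem _ hx) ?_
    rw [map_smul]
    exact hr (f x) ⟨x, hx, rfl⟩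
  · rintro hr y ⟨x, hx, rfl⟩
    rw [← map_smul, hr x hx, map_zero]

/-- Multiplication by a central element `algebraMap R S b` as an `S`-linear map. -/
def bSmul (b : R) : M →ₗ[S] M where
  toFun x := algebraMap R S b • x
  map_add' x y := smul_add _ _ _
  map_smul' s x := by
    simp only [RingHom.id_apply, smul_smul, Algebra.commutes b s]

/-- Every nonzero submodule of a Noetherian module contains an `R`-elementary submodule. -/
lemma exists_isRElem [IsNoetherianRing R] [IsNoetherian S M]
    (N : Submodule S M) (hN : N ≠ ⊥) :
    ∃ L, L ≤ N ∧ IsRElem R L := by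
  have hnoeth : IsNoetherian R R := by infer_instance
  obtain ⟨P, hPmem, hPmax⟩ := set_has_maximal_iff_noetherian.mpr hnoeth
    ((annRS R (S := S) (M := M)) '' {L | L ≤ N ∧ L ≠ ⊥}) ⟨annRS R N, ⟨N, ⟨le_rfl, hN⟩, rfl⟩⟩
  obtain ⟨L, ⟨hLN, hL0⟩, rfl⟩ := hPmem
  -- maximality: any nonzero `L'' ≤ N` with `annRS R L ≤ annRS R L''` has equal annihilator
  have key : ∀ L'' : Submodule S M, L'' ≤ N → L'' ≠ ⊥ → annRS R L ≤ annRS R L'' →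
      annRS R L'' = annRS R L := by
    intro L'' hle hne hsub
    by_contra hne2
    exact hPmax (annRS R L'') ⟨L'', ⟨hle, hne⟩, rfl⟩ (lt_of_le_of_ne hsub (Ne.symm hne2))
  refine ⟨L, hLN, hL0, IsNoetherian.noetherian L, annRS R L, ?_, ?_⟩
  · constructor
    · -- annRS R L ≠ ⊤
      intro htop
      obtain ⟨x, hxL, hx0⟩ := Submodule.ne_bot_iff L |>.mp hL0
      have : algebraMap R S (1 : R) • x = 0 := by
        have h1 : (1 : R) ∈ annRS R L := htop ▸ Submodule.mem_top
        exact h1 x hxL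
      rw [map_one, one_smul] at this
      exact hx0 this
    · intro a b hab
      by_cases hb : b ∈ annRS R L
      · exact Or.inr hb
      · left
        -- consider b • L
        set Lb : Submodule S M := L.map (bSmul b) with hLb
        have hLbL : Lb ≤ L := by
          rintro y ⟨x, hx, rfl⟩
          exact L.smul_mem _ hx
        have hLbne : Lb ≠ ⊥ := by
          rw [mem_annRS'] at hb
          push_neg at hb
          obtain ⟨x, hx, hx0⟩ := hb
          intro hbot
          apply hx0
          have : (bSmul b) x ∈ Lb := ⟨x, hx, rfl⟩
          rw [hbot] at this
          exact this
        have hsub : annRS R L ≤ annRS R Lb := by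
          intro r hr y hy
          obtain ⟨x, hx, rfl⟩ := hy
          show algebraMap R S r • algebraMap R S b • x = 0
          rw [smul_smul, ← map_mul, mul_comm, map_mul, ← smul_smul, hr x hx, smul_zero]
        have heq : annRS R Lb = annRS R L := key Lb (hLbL.trans hLN) hLbne hsub
        rw [← heq]
        rintro y ⟨x, hx, rfl⟩
        show algebraMap R S a • algebraMap R S b • x = 0
        rw [smul_smul, ← map_mul]
        exact hab x hx
  · intro L' hL'L hL'0
    exact key L' (hL'L.trans hLN) hL'0 (annRS_mono hL'L)

/-- The prime of an elementary module is its own annihilator. -/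
lemma IsRElem.annRS_eq_prime {L : Submodule S M} (h : IsRElem R L) :
    ∃ p : Ideal R, p.IsPrime ∧ annRS R L = p ∧
      ∀ L' : Submodule S M, L' ≤ L → L' ≠ ⊥ → annRS R L' = p := by
  obtain ⟨hne, _, p, hp, hall⟩ := h
  exact ⟨p, hp, hall L le_rfl hne, hall⟩

end Aux

/-- A nonzero finitely generated `S`-module `M` admits a finite chain of `S`-submodules
`⊥ = c 0 ≤ c 1 ≤ ⋯ ≤ c p = ⊤` whose successive quotients are `R`-elementary; moreover,
for any such chain, `Ass(M)` is contained in the union of the associated primes of the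
successive quotients. -/
theorem exists_elementary_filtration_and_rAss_subset
    (R S M : Type*) [CommRing R] [IsNoetherianRing R] [Ring S] [IsNoetherianRing S]
    [Algebra R S] [AddCommGroup M] [Module S M]
    (hM : Nontrivial M) (hfg : (⊤ : Submodule S M).FG) :
    (∃ (p : ℕ) (c : ℕ → Submodule S M), c 0 = ⊥ ∧ c p = ⊤ ∧
        (∀ i < p, c i ≤ c (i + 1)) ∧
        ∀ i < p, IsRElem R (Submodule.map (c i).mkQ (c (i + 1)))) ∧
      ∀ (p : ℕ) (c : ℕ → Submodule S M), c 0 = ⊥ → c p = ⊤ →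
        (∀ i < p, c i ≤ c (i + 1)) →
        (∀ i < p, IsRElem R (Submodule.map (c i).mkQ (c (i + 1)))) →
        RAssOf R (⊤ : Submodule S M) ⊆
          ⋃ i < p, RAssOf R (Submodule.map (c i).mkQ (c (i + 1))) := by
  classical
  have hfin : Module.Finite S M := Module.finite_def.mpr hfg
  have hNM : IsNoetherian S M := inferInstance
  constructor
  · -- existence of the filtration
    obtain ⟨N, hNmem, hNmax⟩ := set_has_maximal_iff_noetherian.mpr hNM
      {N : Submodule S M | ∃ (p : ℕ) (c : ℕ → Submodule S M), c 0 = ⊥ ∧ c p = N ∧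
        (∀ i < p, c i ≤ c (i + 1)) ∧
        ∀ i < p, IsRElem R (Submodule.map (c i).mkQ (c (i + 1)))}
      ⟨⊥, 0, fun _ => ⊥, rfl, rfl, fun i hi => absurd hi (Nat.not_lt_zero i),
        fun i hi => absurd hi (Nat.not_lt_zero i)⟩
    obtain ⟨p, c, hc0, hcN, hmono, helem⟩ := hNmem
    by_cases hNtop : N = ⊤
    · exact ⟨p, c, hc0, hNtop ▸ hcN, hmono, helem⟩
    exfalso
    have hntr : Nontrivial (M ⧸ N) :=
      (Submodule.Quotient.nontrivial_iff (p := N)).mpr hNtop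
    haveI := hntr
    have h1 : (⊤ : Submodule S (M ⧸ N)) ≠ ⊥ := top_ne_bot
    obtain ⟨Lbar, -, hLelem⟩ := exists_isRElem (R := R) (⊤ : Submodule S (M ⧸ N)) h1
    set N' := Lbar.comap N.mkQ with hN'def
    have hNN' : N ≤ N' := by
      intro x hx
      show N.mkQ x ∈ Lbar
      have : N.mkQ x = 0 := (Submodule.Quotient.mk_eq_zero N).mpr hx
      rw [this]
      exact Lbar.zero_mem
    have hmap : Submodule.map N.mkQ N' = Lbar :=
      Submodule.map_comap_eq_self (by rw [Submodule.range_mkQ]; exact le_top)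
    have hlt : N < N' := by
      refine lt_of_le_of_ne hNN' fun h => hLelem.1 ?_
      rw [← hmap, ← h]
      rw [eq_bot_iff]
      rintro y ⟨x, hx, rfl⟩
      simp only [Submodule.mem_bot]
      exact (Submodule.Quotient.mk_eq_zero N).mpr hx
    refine hNmax N' ⟨p + 1, fun i => if i ≤ p then c i else N', ?_, ?_, ?_, ?_⟩ hlt
    · show (if (0 : ℕ) ≤ p then c 0 else N') = ⊥
      rw [if_pos (Nat.zero_le p)]; exact hc0
    · show (if p + 1 ≤ p then c (p + 1) else N') = N'
      rw [if_neg (by omega)]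
    · intro i hi
      show (if i ≤ p then c i else N') ≤ (if i + 1 ≤ p then c (i + 1) else N')
      rcases Nat.lt_or_ge i p with h | h
      · rw [if_pos (le_of_lt h), if_pos (Nat.succ_le_of_lt h)]
        exact hmono i h
      · have hip : i = p := by omega
        subst hip
        rw [if_pos le_rfl, if_neg (by omega), hcN]
        exact hNN'
    · intro i hi
      show IsRElem R (Submodule.map (if i ≤ p then c i else N').mkQ
        (if i + 1 ≤ p then c (i + 1) else N'))
      rcases Nat.lt_or_ge i p with h | h
      · have hA : (if i ≤ p then c i else N') = c i := if_pos (le_of_lt h)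
        have hB : (if i + 1 ≤ p then c (i + 1) else N') = c (i + 1) := if_pos (Nat.succ_le_of_lt h)
        rw [hA, hB]
        exact helem i h
      · have hip : i = p := by omega
        subst hip
        have hA : (if i ≤ i then c i else N') = N := by rw [if_pos le_rfl]; exact hcN
        have hB : (if i + 1 ≤ i then c (i + 1) else N') = N' := if_neg (by omega)
        rw [hA, hB, hmap]
        exact hLelem
  · -- any such chain catches all associated primes
    intro p c hc0 hcp hmono helem q hq
    obtain ⟨L, -, hLel, hLann⟩ := hq
    have hL0 : L ≠ ⊥ := hLel.1
    have hp0 : 0 < p := by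
      rcases Nat.eq_zero_or_pos p with h | h
      · exfalso
        subst h
        rw [hc0] at hcp
        exact bot_ne_top hcp
      · exact h
    have hPp : L ⊓ c ((p - 1) + 1) ≠ ⊥ := by
      have he : p - 1 + 1 = p := by omega
      rw [he, hcp, inf_top_eq]
      exact hL0
    have hex : ∃ j, L ⊓ c (j + 1) ≠ ⊥ := ⟨p - 1, hPp⟩
    set i := Nat.find hex with hidef
    have hi_spec : L ⊓ c (i + 1) ≠ ⊥ := Nat.find_spec hex
    have hi_le : i ≤ p - 1 := Nat.find_min' hex hPp
    have hi_lt : i < p := by omega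
    have hbot : L ⊓ c i = ⊥ := by
      by_cases h0 : i = 0
      · rw [h0, hc0, inf_bot_eq]
      · have h1 : i - 1 < i := by omega
        have := Nat.find_min hex h1
        push_neg at this
        rw [show i - 1 + 1 = i by omega] at this
        exact this
    set L' := L ⊓ c (i + 1) with hL'def
    have hinj : ∀ x ∈ L', (c i).mkQ x = 0 → x = 0 := by
      intro x hx hfx
      have hxi : x ∈ c i := (Submodule.Quotient.mk_eq_zero (c i)).mp hfx
      have : x ∈ L ⊓ c i := ⟨hx.1, hxi⟩
      rw [hbot] at this
      exact this
    set K := L'.map (c i).mkQ with hKdef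
    have hKle : K ≤ Submodule.map (c i).mkQ (c (i + 1)) :=
      Submodule.map_mono inf_le_right
    have hKne : K ≠ ⊥ := by
      obtain ⟨x, hxL', hx0⟩ := (Submodule.ne_bot_iff L').mp hi_spec
      refine (Submodule.ne_bot_iff K).mpr ⟨(c i).mkQ x, ⟨x, hxL', rfl⟩, fun h => hx0 ?_⟩
      exact hinj x hxL' h
    have hKann : annRS R K = annRS R L' := annRS_map _ hinj
    obtain ⟨p₀, hp₀, hLannp, hallL⟩ := hLel.annRS_eq_prime
    have hL'ann : annRS R L' = p₀ := hallL L' inf_le_left hi_spec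
    obtain ⟨q₀, hq₀, hQann, hQall⟩ := (helem i hi_lt).annRS_eq_prime
    have hKq₀ : annRS R K = q₀ := hQall K hKle hKne
    have hq₀q : q₀ = q := by
      rw [← hKq₀, hKann, hL'ann, ← hLannp, hLann]
    refine Set.mem_biUnion hi_lt ?_
    exact ⟨Submodule.map (c i).mkQ (c (i + 1)), le_rfl, helem i hi_lt, by rw [hQann, hq₀q]⟩
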